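/- arXiv:1811.10260 — 4 statements merged into one kernel-verified Lean document; each statement's English description precedes it below -/
import Mathlib

section
/- Let A be a commutative filtered ring and f: M → N a morphism of filtered A-modules. Then f is strict (i.e. F^i N ∩ f(M) = f(F^i M) for all i) if and only if the sequence gr(ker f) → gr(M) → gr(N) is exact, and also if and only if the sequence 0 → gr(ker f) → gr(M) → gr(N) → gr(coker f) → 0 is exact. Here ker f and im f carry induced filtrations, and coker f the quotient filtration. -/
/-- Let `A` be a commutative filtered ring and `f : M → N` a morphism of
filtered `A`-modules.  Then `f` is strict (`F^i N ∩ f(M) = f(F^i M)` for all `i`) iff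
`gr(ker f) → gr(M) → gr(N)` is exact, iff
`0 → gr(ker f) → gr(M) → gr(N) → gr(coker f) → 0` is exact
(`ker f`, `im f` carry the induced filtrations and `coker f` the quotient filtration).
Exactness of the graded sequences is spelled out elementwise; the exactness conditions at
`gr(ker f)` and at `gr(coker f)` hold automatically for the induced/quotient filtrations, and the
remaining conditions are exactness at `gr(M)` and at `gr(N)`. -/
theorem stmt_3 (A M N : Type*) [CommRing A]
    [AddCommGroup M] [Module A M] [AddCommGroup N] [Module A N]
    (FA : ℤ → Ideal A)
    (hFAmono : ∀ i, FA (i + 1) ≤ FA i) (hFAmul : ∀ i j, FA i * FA j ≤ FA (i + j))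
    (hFAex : ∃ a : ℤ, ∀ i ≤ a, FA i = ⊤)
    (FM : ℤ → Submodule A M) (FN : ℤ → Submodule A N)
    (hFMmono : ∀ i, FM (i + 1) ≤ FM i) (hFMsmul : ∀ i j, FA i • FM j ≤ FM (i + j))
    (hFMex : ∃ a : ℤ, ∀ i ≤ a, FM i = ⊤)
    (hFNmono : ∀ i, FN (i + 1) ≤ FN i) (hFNsmul : ∀ i j, FA i • FN j ≤ FN (i + j))
    (hFNex : ∃ a : ℤ, ∀ i ≤ a, FN i = ⊤)
    (f : M →ₗ[A] N) (hfil : ∀ i, (FM i).map f ≤ FN i) :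
    -- exactness of `gr(ker f) → gr(M) → gr(N)` at `gr(M)`:
    -- a class of `gr^i(M)` killed in `gr^i(N)` comes from `gr^i(ker f)`
    ((∀ i, FN i ⊓ LinearMap.range f = (FM i).map f) ↔
        (∀ i : ℤ, ∀ m ∈ FM i, f m ∈ FN (i + 1) →
          ∃ m' ∈ FM i, f m' = 0 ∧ m - m' ∈ FM (i + 1))) ∧
    -- exactness of the five term sequence: the previous condition together with exactness
    -- at `gr(N)`: a class of `gr^i(N)` killed in `gr^i(coker f)` comes from `gr^i(M)`
    ((∀ i, FN i ⊓ LinearMap.range f = (FM i).map f) ↔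
        ((∀ i : ℤ, ∀ m ∈ FM i, f m ∈ FN (i + 1) →
            ∃ m' ∈ FM i, f m' = 0 ∧ m - m' ∈ FM (i + 1)) ∧
         (∀ i : ℤ, ∀ n ∈ FN i, (∃ n' ∈ FN (i + 1), n - n' ∈ LinearMap.range f) →
            ∃ m ∈ FM i, n - f m ∈ FN (i + 1)))) := by
  have FMa : ∀ i j : ℤ, i ≤ j → FM j ≤ FM i := fun i j h =>
    antitone_int_of_succ_le hFMmono h
  have FNa : ∀ i j : ℤ, i ≤ j → FN j ≤ FN i := fun i j h =>
    antitone_int_of_succ_le hFNmono h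
  have hS1 : (∀ i, FN i ⊓ LinearMap.range f = (FM i).map f) →
      (∀ i : ℤ, ∀ m ∈ FM i, f m ∈ FN (i + 1) →
          ∃ m' ∈ FM i, f m' = 0 ∧ m - m' ∈ FM (i + 1)) := by
    intro hS i m hm hfm
    have h : f m ∈ FN (i + 1) ⊓ LinearMap.range f := ⟨hfm, ⟨m, rfl⟩⟩
    rw [hS] at h
    obtain ⟨m'', hm'', hfm''⟩ := h
    refine ⟨m - m'', sub_mem hm (FMa i (i + 1) (by omega) hm''), ?_, by simpa using hm''⟩
    rw [map_sub, hfm'', sub_self]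
  have h1S : (∀ i : ℤ, ∀ m ∈ FM i, f m ∈ FN (i + 1) →
          ∃ m' ∈ FM i, f m' = 0 ∧ m - m' ∈ FM (i + 1)) →
      (∀ i, FN i ⊓ LinearMap.range f = (FM i).map f) := by
    intro h1 i
    have key : ∀ k : ℕ, ∀ m : M, m ∈ FM (i - k) → f m ∈ FN i →
        ∃ m' ∈ FM i, f m' = f m := by
      intro k
      induction k with
      | zero => intro m hm hfm; exact ⟨m, by simpa using hm, rfl⟩
      | succ k ih =>
        intro m hm hfm
        have hm' : m ∈ FM (i - (k : ℤ) - 1) := by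
          have e : (i : ℤ) - ((k : ℕ) + 1 : ℕ) = i - (k : ℤ) - 1 := by push_cast; ring
          rwa [e] at hm
        have hfm' : f m ∈ FN ((i - (k : ℤ) - 1) + 1) := by
          have e : (i : ℤ) - (k : ℤ) - 1 + 1 = i - k := by ring
          rw [e]
          exact FNa _ i (by omega) hfm
        obtain ⟨m', hm'1, hfm'0, hmm'⟩ := h1 (i - (k : ℤ) - 1) m hm' hfm'
        have hsub : m - m' ∈ FM (i - (k : ℤ)) := by
          have e : (i : ℤ) - (k : ℤ) - 1 + 1 = i - k := by ring
          rwa [e] at hmm'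
        obtain ⟨m'', hm'', hfm''⟩ := ih (m - m') hsub
          (by rw [map_sub, hfm'0, sub_zero]; exact hfm)
        exact ⟨m'', hm'', by rw [hfm'', map_sub, hfm'0, sub_zero]⟩
    refine le_antisymm ?_ (le_inf (hfil i) (LinearMap.map_le_range))
    rintro n ⟨hn1, m, rfl⟩
    obtain ⟨a, ha⟩ := hFMex
    have hm : m ∈ FM (i - ((i - a).toNat : ℤ)) := by
      rw [ha _ (by omega)]; trivial
    obtain ⟨m', hm', hfm'⟩ := key (i - a).toNat m hm hn1
    exact ⟨m', hm', hfm'⟩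
  have hS2 : (∀ i, FN i ⊓ LinearMap.range f = (FM i).map f) →
      (∀ i : ℤ, ∀ n ∈ FN i, (∃ n' ∈ FN (i + 1), n - n' ∈ LinearMap.range f) →
          ∃ m ∈ FM i, n - f m ∈ FN (i + 1)) := by
    intro hS i n hn h
    obtain ⟨n', hn', hr⟩ := h
    have hmem : n - n' ∈ FN i ⊓ LinearMap.range f :=
      ⟨sub_mem hn (FNa i (i + 1) (by omega) hn'), hr⟩
    rw [hS] at hmem
    obtain ⟨m, hm, hfm⟩ := hmem
    refine ⟨m, hm, ?_⟩
    rw [hfm, sub_sub_cancel]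
    exact hn'
  exact ⟨⟨hS1, h1S⟩, ⟨fun hS => ⟨hS1 hS, hS2 hS⟩, fun h => h1S h.1⟩⟩
end

section
/- Let k be a field and 0 → M → N → P → 0 a sequence of finite dimensional discretely filtered k-vector spaces which is exact as a sequence of k-vector spaces, with both maps filtered (f: M → N, g: N → P). If f is strict then Σ_i i·dim gr^i(N) ≤ Σ_i i·dim gr^i(M) + Σ_i i·dim gr^i(P); if g is strict then the reverse inequality holds. If one of f, g is strict and equality holds, then the sequence is exact as filtered vector spaces, i.e. 0 → gr(M) → gr(N) → gr(P) → 0 is exact. -/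
open Module

/-- Abel summation over `Finset.Icc a b` in `ℤ`. -/
private lemma abel_sum_aux (e : ℤ → ℤ) (a b : ℤ) (hab : a ≤ b) :
    ∑ i ∈ Finset.Icc a b, i * (e i - e (i + 1)) =
      a * e a + (∑ i ∈ Finset.Ioc a b, e i) - b * e (b + 1) := by
  refine Int.le_induction (motive := fun b _ => ∑ i ∈ Finset.Icc a b, i * (e i - e (i + 1)) =
      a * e a + (∑ i ∈ Finset.Ioc a b, e i) - b * e (b + 1)) ?_ ?_ b hab
  · simp [mul_sub]
  · intro b _ ih
    have h1 : Finset.Icc a (b + 1) = insert (b + 1) (Finset.Icc a b) := by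
      ext x; simp only [Finset.mem_Icc, Finset.mem_insert]; omega
    have h2 : Finset.Ioc a (b + 1) = insert (b + 1) (Finset.Ioc a b) := by
      ext x; simp only [Finset.mem_Ioc, Finset.mem_insert]; omega
    rw [h1, Finset.sum_insert (by simp), h2, Finset.sum_insert (by simp), ih]
    ring

/-- Dimension splitting along a linear map. -/
private lemma dim_split_aux {k N P : Type*} [Field k] [AddCommGroup N] [Module k N]
    [FiniteDimensional k N] [AddCommGroup P] [Module k P]
    (g : N →ₗ[k] P) (S : Submodule k N) :
    finrank k S =
      finrank k (S ⊓ LinearMap.ker g : Submodule k N) + finrank k (S.map g) := by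
  have h := LinearMap.finrank_range_add_finrank_ker (g ∘ₗ S.subtype)
  rw [LinearMap.range_comp, Submodule.range_subtype] at h
  have hker : LinearMap.ker (g ∘ₗ S.subtype)
      = Submodule.comap S.subtype (S ⊓ LinearMap.ker g) := by
    rw [LinearMap.ker_comp]
    ext x
    simp [x.2]
  rw [hker, LinearEquiv.finrank_eq
    (Submodule.comapSubtypeEquivOfLe (inf_le_left : S ⊓ LinearMap.ker g ≤ S))] at h
  omega

/-- Let `0 → M → N → P → 0` be a sequence of finite dimensional discretely
filtered `k`-vector spaces, exact as vector spaces, with both maps filtered.  If `f` is strict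
then `∑ i·dim gr^i(N) ≤ ∑ i·dim gr^i(M) + ∑ i·dim gr^i(P)`; if `g` is strict the reverse
inequality holds.  If one of `f`, `g` is strict and equality holds then the sequence
`0 → gr(M) → gr(N) → gr(P) → 0` is exact (spelled out elementwise). -/
theorem stmt_5 (k M N P : Type*) [Field k]
    [AddCommGroup M] [Module k M] [FiniteDimensional k M]
    [AddCommGroup N] [Module k N] [FiniteDimensional k N]
    [AddCommGroup P] [Module k P] [FiniteDimensional k P]
    (FM : ℤ → Submodule k M) (FN : ℤ → Submodule k N) (FP : ℤ → Submodule k P)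
    (hFM : ∀ i, FM (i + 1) ≤ FM i) (hFN : ∀ i, FN (i + 1) ≤ FN i) (hFP : ∀ i, FP (i + 1) ≤ FP i)
    (hFMtop : ∃ a : ℤ, ∀ i ≤ a, FM i = ⊤) (hFMbot : ∃ b : ℤ, ∀ i, b ≤ i → FM i = ⊥)
    (hFNtop : ∃ a : ℤ, ∀ i ≤ a, FN i = ⊤) (hFNbot : ∃ b : ℤ, ∀ i, b ≤ i → FN i = ⊥)
    (hFPtop : ∃ a : ℤ, ∀ i ≤ a, FP i = ⊤) (hFPbot : ∃ b : ℤ, ∀ i, b ≤ i → FP i = ⊥)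
    (f : M →ₗ[k] N) (g : N →ₗ[k] P)
    (hfinj : Function.Injective f) (hgsurj : Function.Surjective g)
    (hexact : LinearMap.range f = LinearMap.ker g)
    (hffil : ∀ i, (FM i).map f ≤ FN i) (hgfil : ∀ i, (FN i).map g ≤ FP i) :
    -- if `f` is strict:
    ((∀ i, FN i ⊓ LinearMap.range f = (FM i).map f) →
      (∑ᶠ i : ℤ, i * ((finrank k (FN i) : ℤ) - (finrank k (FN (i + 1)) : ℤ)))
        ≤ (∑ᶠ i : ℤ, i * ((finrank k (FM i) : ℤ) - (finrank k (FM (i + 1)) : ℤ)))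
          + (∑ᶠ i : ℤ, i * ((finrank k (FP i) : ℤ) - (finrank k (FP (i + 1)) : ℤ)))) ∧
    -- if `g` is strict:
    ((∀ i, (FN i).map g = FP i) →
      (∑ᶠ i : ℤ, i * ((finrank k (FM i) : ℤ) - (finrank k (FM (i + 1)) : ℤ)))
          + (∑ᶠ i : ℤ, i * ((finrank k (FP i) : ℤ) - (finrank k (FP (i + 1)) : ℤ)))
        ≤ (∑ᶠ i : ℤ, i * ((finrank k (FN i) : ℤ) - (finrank k (FN (i + 1)) : ℤ)))) ∧
    -- if one of `f, g` is strict and equality holds, the sequence is exact in `Fil(k)`,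
    -- i.e. `0 → gr(M) → gr(N) → gr(P) → 0` is exact:
    (((∀ i, FN i ⊓ LinearMap.range f = (FM i).map f) ∨ (∀ i, (FN i).map g = FP i)) →
      (∑ᶠ i : ℤ, i * ((finrank k (FN i) : ℤ) - (finrank k (FN (i + 1)) : ℤ)))
          = (∑ᶠ i : ℤ, i * ((finrank k (FM i) : ℤ) - (finrank k (FM (i + 1)) : ℤ)))
            + (∑ᶠ i : ℤ, i * ((finrank k (FP i) : ℤ) - (finrank k (FP (i + 1)) : ℤ))) →
      ((∀ i : ℤ, ∀ m ∈ FM i, f m ∈ FN (i + 1) → m ∈ FM (i + 1)) ∧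
       (∀ i : ℤ, ∀ n ∈ FN i, g n ∈ FP (i + 1) → ∃ m ∈ FM i, n - f m ∈ FN (i + 1)) ∧
       (∀ i : ℤ, ∀ q ∈ FP i, ∃ n ∈ FN i, q - g n ∈ FP (i + 1)))) := by
  classical
  obtain ⟨aM, haM⟩ := hFMtop
  obtain ⟨bM, hbM⟩ := hFMbot
  obtain ⟨aN, haN⟩ := hFNtop
  obtain ⟨bN, hbN⟩ := hFNbot
  obtain ⟨aP, haP⟩ := hFPtop
  obtain ⟨bP, hbP⟩ := hFPbot
  set a : ℤ := min aM (min aN aP) with ha_def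
  set b : ℤ := max a (max bM (max bN bP)) with hb_def
  have hab : a ≤ b := le_max_left _ _
  have htopM : ∀ i ≤ a, FM i = ⊤ := fun i hi => haM i (by omega)
  have htopN : ∀ i ≤ a, FN i = ⊤ := fun i hi => haN i (by omega)
  have htopP : ∀ i ≤ a, FP i = ⊤ := fun i hi => haP i (by omega)
  have hbotM : ∀ i, b < i → FM i = ⊥ := fun i hi => hbM i (by omega)
  have hbotN : ∀ i, b < i → FN i = ⊥ := fun i hi => hbN i (by omega)
  have hbotP : ∀ i, b < i → FP i = ⊥ := fun i hi => hbP i (by omega)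
  set dM : ℤ → ℤ := fun i => (finrank k (FM i) : ℤ) with hdM
  set dN : ℤ → ℤ := fun i => (finrank k (FN i) : ℤ) with hdN
  set dP : ℤ → ℤ := fun i => (finrank k (FP i) : ℤ) with hdP
  -- supports
  have hsupp : ∀ (d : ℤ → ℤ), (∀ i, i < a → d i = d (i + 1)) →
      (∀ i, b < i → d i = d (i + 1)) →
      Function.support (fun i : ℤ => i * (d i - d (i + 1))) ⊆ ↑(Finset.Icc a b) := by
    intro d h1 h2 i hi
    simp only [Function.mem_support] at hi
    simp only [Finset.coe_Icc, Set.mem_Icc]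
    by_contra hc
    push_neg at hc
    apply hi
    rcases lt_or_ge i a with h | h
    · rw [h1 i h]; ring
    · rw [h2 i (hc h)]; ring
  have hsM : Function.support (fun i : ℤ => i * (dM i - dM (i + 1))) ⊆ ↑(Finset.Icc a b) :=
    hsupp dM
      (fun i hi => by simp only [hdM]; rw [htopM i hi.le, htopM (i + 1) (by omega)])
      (fun i hi => by simp only [hdM]; rw [hbotM i hi, hbotM (i + 1) (by omega)])
  have hsN : Function.support (fun i : ℤ => i * (dN i - dN (i + 1))) ⊆ ↑(Finset.Icc a b) :=
    hsupp dN
      (fun i hi => by simp only [hdN]; rw [htopN i hi.le, htopN (i + 1) (by omega)])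
      (fun i hi => by simp only [hdN]; rw [hbotN i hi, hbotN (i + 1) (by omega)])
  have hsP : Function.support (fun i : ℤ => i * (dP i - dP (i + 1))) ⊆ ↑(Finset.Icc a b) :=
    hsupp dP
      (fun i hi => by simp only [hdP]; rw [htopP i hi.le, htopP (i + 1) (by omega)])
      (fun i hi => by simp only [hdP]; rw [hbotP i hi, hbotP (i + 1) (by omega)])
  have eqM : (∑ᶠ i : ℤ, i * ((finrank k (FM i) : ℤ) - (finrank k (FM (i + 1)) : ℤ)))
      = ∑ i ∈ Finset.Icc a b, i * (dM i - dM (i + 1)) :=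
    finsum_eq_sum_of_support_subset _ hsM
  have eqN : (∑ᶠ i : ℤ, i * ((finrank k (FN i) : ℤ) - (finrank k (FN (i + 1)) : ℤ)))
      = ∑ i ∈ Finset.Icc a b, i * (dN i - dN (i + 1)) :=
    finsum_eq_sum_of_support_subset _ hsN
  have eqP : (∑ᶠ i : ℤ, i * ((finrank k (FP i) : ℤ) - (finrank k (FP (i + 1)) : ℤ)))
      = ∑ i ∈ Finset.Icc a b, i * (dP i - dP (i + 1)) :=
    finsum_eq_sum_of_support_subset _ hsP
  -- rank-nullity for the whole spaces
  have hrng : LinearMap.range g = ⊤ := LinearMap.range_eq_top.2 hgsurj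
  have hrn : finrank k N = finrank k M + finrank k P := by
    have h1 := LinearMap.finrank_range_add_finrank_ker g
    have h3 : finrank k (LinearMap.range f) = finrank k M :=
      LinearMap.finrank_range_of_inj hfinj
    rw [← hexact] at h1
    rw [hrng, finrank_top] at h1
    omega
  set e : ℤ → ℤ := fun i => dN i - dM i - dP i with he_def
  -- e vanishes outside (a, b]
  have hea : ∀ i ≤ a, e i = 0 := by
    intro i hi
    simp only [he_def, hdM, hdN, hdP]
    rw [htopM i hi, htopN i hi, htopP i hi, finrank_top, finrank_top, finrank_top]
    push_cast [hrn]
    ring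
  have heb : ∀ i, b < i → e i = 0 := by
    intro i hi
    simp only [he_def, hdM, hdN, hdP]
    rw [hbotM i hi, hbotN i hi, hbotP i hi, finrank_bot, finrank_bot, finrank_bot]
    simp
  -- the difference of the three sums
  have hdiff : (∑ i ∈ Finset.Icc a b, i * (dN i - dN (i + 1)))
      - (∑ i ∈ Finset.Icc a b, i * (dM i - dM (i + 1)))
      - (∑ i ∈ Finset.Icc a b, i * (dP i - dP (i + 1)))
      = ∑ i ∈ Finset.Ioc a b, e i := by
    rw [← Finset.sum_sub_distrib, ← Finset.sum_sub_distrib]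
    have : ∀ i ∈ Finset.Icc a b,
        i * (dN i - dN (i + 1)) - i * (dM i - dM (i + 1)) - i * (dP i - dP (i + 1))
          = i * (e i - e (i + 1)) := by
      intro i _
      simp only [he_def]
      ring
    rw [Finset.sum_congr rfl this, abel_sum_aux e a b hab, hea a le_rfl,
      heb (b + 1) (by omega)]
    ring
  -- per-index dimension identity
  have key : ∀ i : ℤ, dN i
      = (finrank k (FN i ⊓ LinearMap.range f : Submodule k N) : ℤ)
        + (finrank k ((FN i).map g) : ℤ) := by
    intro i
    simp only [hdN]
    rw [hexact]
    exact_mod_cast congrArg (Nat.cast (R := ℤ)) (dim_split_aux g (FN i))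
  have hMle : ∀ i : ℤ, dM i ≤ (finrank k (FN i ⊓ LinearMap.range f : Submodule k N) : ℤ) := by
    intro i
    have hle : (FM i).map f ≤ FN i ⊓ LinearMap.range f :=
      le_inf (hffil i) (by rintro x ⟨m, -, rfl⟩; exact ⟨m, rfl⟩)
    have := Submodule.finrank_mono hle
    have h2 : finrank k (FM i) = finrank k ((FM i).map f) :=
      (Submodule.equivMapOfInjective f hfinj (FM i)).finrank_eq
    simp only [hdM]
    omega
  have hPge : ∀ i : ℤ, (finrank k ((FN i).map g) : ℤ) ≤ dP i := by
    intro i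
    have := Submodule.finrank_mono (hgfil i)
    simp only [hdP]
    omega
  -- per-index inequalities under strictness
  have hfle : (∀ i, FN i ⊓ LinearMap.range f = (FM i).map f) → ∀ i : ℤ, e i ≤ 0 := by
    intro hs i
    have h1 := key i
    have h2 := hPge i
    have h3 : (finrank k (FN i ⊓ LinearMap.range f : Submodule k N) : ℤ) = dM i := by
      rw [hs i]
      simp only [hdM]
      exact_mod_cast congrArg (Nat.cast (R := ℤ))
        (Submodule.equivMapOfInjective f hfinj (FM i)).finrank_eq.symm
    simp only [he_def]
    omega
  have hgge : (∀ i, (FN i).map g = FP i) → ∀ i : ℤ, 0 ≤ e i := by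
    intro hs i
    have h1 := key i
    have h2 := hMle i
    have h3 : (finrank k ((FN i).map g) : ℤ) = dP i := by
      rw [hs i]
    simp only [he_def]
    omega
  refine ⟨?_, ?_, ?_⟩
  · -- f strict ⇒ ≤
    intro hs
    rw [eqM, eqN, eqP]
    have hsum : (∑ i ∈ Finset.Ioc a b, e i) ≤ 0 :=
      Finset.sum_nonpos fun i _ => hfle hs i
    omega
  · -- g strict ⇒ ≥
    intro hs
    rw [eqM, eqN, eqP]
    have hsum : (0 : ℤ) ≤ ∑ i ∈ Finset.Ioc a b, e i :=
      Finset.sum_nonneg fun i _ => hgge hs i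
    omega
  · -- equality case
    intro hcase heq
    rw [eqM, eqN, eqP] at heq
    have hsum0 : (∑ i ∈ Finset.Ioc a b, e i) = 0 := by omega
    -- every e i = 0
    have he0 : ∀ i : ℤ, e i = 0 := by
      have hall : ∀ i ∈ Finset.Ioc a b, e i = 0 := by
        rcases hcase with hs | hs
        · exact (Finset.sum_eq_zero_iff_of_nonpos fun i _ => hfle hs i).1 hsum0
        · exact (Finset.sum_eq_zero_iff_of_nonneg fun i _ => hgge hs i).1 hsum0
      intro i
      rcases le_or_gt i a with h | h
      · exact hea i h
      · rcases le_or_gt i b with h' | h'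
        · exact hall i (Finset.mem_Ioc.2 ⟨h, h'⟩)
        · exact heb i h'
    -- both strictness conditions hold at every index
    have hboth : ∀ i : ℤ, FN i ⊓ LinearMap.range f = (FM i).map f ∧ (FN i).map g = FP i := by
      intro i
      have h1 := key i
      have h2 := hMle i
      have h3 := hPge i
      have h0 := he0 i
      simp only [he_def] at h0
      have hrkM : finrank k (FM i) = finrank k ((FM i).map f) :=
        (Submodule.equivMapOfInjective f hfinj (FM i)).finrank_eq
      rcases hcase with hs | hs
      · -- f strict: derive g strictness at i
        have h4 : (finrank k (FN i ⊓ LinearMap.range f : Submodule k N) : ℤ) = dM i := by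
          rw [hs i]
          simp only [hdM]
          exact_mod_cast congrArg (Nat.cast (R := ℤ)) hrkM.symm
        refine ⟨hs i, Submodule.eq_of_le_of_finrank_le (hgfil i) ?_⟩
        simp only [hdM, hdN, hdP] at h0 h1 h4
        omega
      · -- g strict: derive f strictness at i
        have h4 : (finrank k ((FN i).map g) : ℤ) = dP i := by rw [hs i]
        refine ⟨(Submodule.eq_of_le_of_finrank_le
          (le_inf (hffil i) (by rintro x ⟨m, -, rfl⟩; exact ⟨m, rfl⟩)) ?_).symm, hs i⟩
        simp only [hdM, hdN, hdP] at h0 h1 h4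
        omega
    refine ⟨?_, ?_, ?_⟩
    · -- gr(f) injective
      intro i m hm hfm
      have : f m ∈ FN (i + 1) ⊓ LinearMap.range f := ⟨hfm, ⟨m, rfl⟩⟩
      rw [(hboth (i + 1)).1] at this
      obtain ⟨m', hm', hfm'⟩ := this
      rwa [← hfinj hfm']
    · -- exactness at gr(N)
      intro i n hn hgn
      rw [← (hboth (i + 1)).2] at hgn
      obtain ⟨n', hn', hgn'⟩ := hgn
      have hker : n - n' ∈ FN i ⊓ LinearMap.range f := by
        refine ⟨sub_mem hn (hFN i hn'), ?_⟩
        rw [hexact]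
        simp [LinearMap.mem_ker, hgn']
      rw [(hboth i).1] at hker
      obtain ⟨m, hm, hfm⟩ := hker
      refine ⟨m, hm, ?_⟩
      rw [hfm]
      simpa using hn'
    · -- gr(g) surjective
      intro i q hq
      rw [← (hboth i).2] at hq
      obtain ⟨n, hn, hgn⟩ := hq
      exact ⟨n, hn, by rw [hgn, sub_self]; exact zero_mem _⟩
end

section
/- Let K be a local field with finite residue field k of characteristic p, and let V be a continuous irreducible representation of G_K = Gal(K̄/K) on a finite dimensional F̄_p-vector space. Then V ≅ Ind_{G_L}^{G_K} χ for some unramified extension L/K of degree dim V and some continuous character χ: G_L → F̄_p^×. -/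
lemma exists_common_eigenvector_aux {F : Type*} [Field F] [IsAlgClosed F] {ι : Type*} :
    ∀ (n : ℕ) (V : Type*) [AddCommGroup V] [Module F V],
      FiniteDimensional F V → Nontrivial V → Module.finrank F V = n →
      ∀ f : ι → Module.End F V, (∀ i j, Commute (f i) (f j)) →
      ∃ v : V, v ≠ 0 ∧ ∀ i, ∃ c : F, f i v = c • v := by
  intro n
  induction n using Nat.strong_induction_on with
  | _ n IH =>
    intro V _ _ hfd hnt hrank f hcomm
    by_cases hscal : ∀ i, ∃ c : F, f i = c • (1 : Module.End F V)
    · obtain ⟨v, hv⟩ := exists_ne (0 : V)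
      refine ⟨v, hv, fun i => ?_⟩
      obtain ⟨c, hc⟩ := hscal i
      exact ⟨c, by rw [hc]; simp⟩
    · push_neg at hscal
      obtain ⟨j, hj⟩ := hscal
      obtain ⟨μ, hμ⟩ := Module.End.exists_eigenvalue (f j)
      set W := Module.End.eigenspace (f j) μ with hW
      have hW_ne_bot : W ≠ ⊥ := hμ
      have hW_ne_top : W ≠ ⊤ := by
        intro htop
        apply hj μ
        ext v
        have : v ∈ W := htop ▸ Submodule.mem_top
        rw [Module.End.mem_eigenspace_iff] at this
        simpa using this
      haveI : Nontrivial ↥W := Submodule.nontrivial_iff_ne_bot.mpr hW_ne_bot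
      have hstab : ∀ i, ∀ v ∈ W, f i v ∈ W := by
        intro i v hv
        rw [hW, Module.End.mem_eigenspace_iff] at hv ⊢
        have := congrArg (fun g => g v) (hcomm j i)
        simp only [Module.End.mul_apply] at this
        rw [this, hv, map_smul]
      let g : ι → Module.End F ↥W := fun i => (f i).restrict (hstab i)
      have hlt : Module.finrank F ↥W < n := hrank ▸ Submodule.finrank_lt hW_ne_top
      have hgcomm : ∀ i j, Commute (g i) (g j) := by
        intro i j
        apply LinearMap.ext
        rintro ⟨v, hv⟩
        apply Subtype.ext
        simp only [Module.End.mul_apply, g, LinearMap.restrict_coe_apply]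
        have := congrArg (fun h => h v) (hcomm i j)
        simpa using this
      obtain ⟨v, hv0, hv⟩ := IH _ hlt ↥W inferInstance ‹Nontrivial ↥W› rfl g hgcomm
      refine ⟨↑v, by simpa using hv0, fun i => ?_⟩
      obtain ⟨c, hc⟩ := hv i
      refine ⟨c, ?_⟩
      have := congrArg Subtype.val hc
      simpa [g, LinearMap.restrict_coe_apply] using this

lemma pgroup_exists_fixed_vector {p : ℕ} [Fact p.Prime] {Γ : Type*} [Group Γ] [Finite Γ]
    (hΓ : IsPGroup p Γ) {F : Type*} [Field F] [CharP F p] {V : Type*} [AddCommGroup V]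
    [Module F V] (φ : Γ →* (V →ₗ[F] V)ˣ) (v₀ : V) (hv₀ : v₀ ≠ 0) :
    ∃ v : V, v ≠ 0 ∧ ∀ x : Γ, ((φ x : V →ₗ[F] V)) v = v := by
  classical
  letI : Module (ZMod p) V := Module.compHom V (ZMod.castHom (dvd_refl p) F)
  have hsm : ∀ (c : ZMod p) (v : V), c • v = (ZMod.castHom (dvd_refl p) F c) • v :=
    fun c v => rfl
  set S : Set V := Set.range (fun x : Γ => (φ x : V →ₗ[F] V) v₀) with hS
  have hSfin : S.Finite := Set.finite_range _
  set W : Submodule (ZMod p) V := Submodule.span (ZMod p) S with hWdef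
  haveI : FiniteDimensional (ZMod p) ↥W := FiniteDimensional.span_of_finite _ hSfin
  haveI : Finite ↥W := Module.finite_of_finite (ZMod p)
  have hstab : ∀ x : Γ, ∀ w ∈ W, (φ x : V →ₗ[F] V) w ∈ W := by
    intro x w hw
    induction hw using Submodule.span_induction with
    | mem y hy =>
      obtain ⟨z, rfl⟩ := hy
      apply Submodule.subset_span
      refine ⟨x * z, ?_⟩
      show ((φ (x * z) : V →ₗ[F] V)) v₀ = (φ x : V →ₗ[F] V) ((φ z : V →ₗ[F] V) v₀)
      rw [map_mul, Units.val_mul]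
      rfl
    | zero => simpa using W.zero_mem
    | add a b _ _ ha hb => rw [map_add]; exact W.add_mem ha hb
    | smul c a _ ha =>
      rw [hsm, map_smul, ← hsm]
      exact W.smul_mem c ha
  letI : SMul Γ ↥W := ⟨fun x w => ⟨(φ x : V →ₗ[F] V) w, hstab x w w.2⟩⟩
  have hsmul_def : ∀ (x : Γ) (w : ↥W), ((x • w : ↥W) : V) = (φ x : V →ₗ[F] V) w := fun _ _ => rfl
  letI : MulAction Γ ↥W :=
    { one_smul := by
        intro w
        apply Subtype.ext
        rw [hsmul_def, map_one, Units.val_one]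
        rfl
      mul_smul := by
        intro x y w
        apply Subtype.ext
        rw [hsmul_def, hsmul_def, hsmul_def, map_mul, Units.val_mul]
        rfl }
  -- v₀ ∈ W
  have hv₀W : v₀ ∈ W := Submodule.subset_span ⟨1, by
    show ((φ 1 : V →ₗ[F] V)) v₀ = v₀
    rw [map_one, Units.val_one]; rfl⟩
  -- card W is a positive power of p
  have hpgrp : IsPGroup p (Multiplicative ↥W) := by
    intro w
    refine ⟨1, ?_⟩
    have : (p ^ 1) • w.toAdd = 0 := by
      rw [pow_one]
      apply Subtype.ext
      have : ((p • w.toAdd : ↥W) : V) = p • (w.toAdd : V) := by push_cast; rfl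
      rw [this]
      have hc : (p : F) • ((w.toAdd : ↥W) : V) = p • ((w.toAdd : ↥W) : V) :=
        Nat.cast_smul_eq_nsmul F p _
      rw [← hc, CharP.cast_eq_zero F p, zero_smul]
      rfl
    calc w ^ p ^ 1 = Multiplicative.ofAdd ((p ^ 1) • w.toAdd) := rfl
    _ = 1 := by rw [this]; rfl
  obtain ⟨n, hn⟩ := (IsPGroup.iff_card (p := p) (G := Multiplicative ↥W)).mp hpgrp
  have hcardW : Nat.card ↥W = p ^ n := by
    rw [← hn]; rfl
  have hW_nontriv : Nontrivial ↥W := ⟨⟨⟨v₀, hv₀W⟩, 0, by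
    intro h
    exact hv₀ (by simpa using congrArg Subtype.val h)⟩⟩
  have hn0 : n ≠ 0 := by
    intro h
    rw [h, pow_zero] at hcardW
    exact (Finite.one_lt_card_iff_nontrivial.mpr hW_nontriv).ne' hcardW
  have hpdvd : p ∣ Nat.card ↥W := hcardW ▸ dvd_pow_self p hn0
  -- fixed points
  have hmod := hΓ.card_modEq_card_fixedPoints ↥W
  have hzero_fixed : (0 : ↥W) ∈ MulAction.fixedPoints Γ ↥W := by
    intro x
    apply Subtype.ext
    rw [hsmul_def]
    simpa using rfl
  have hpdvd_fixed : p ∣ Nat.card (MulAction.fixedPoints Γ ↥W) :=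
    (Nat.modEq_zero_iff_dvd.mp ((hmod.symm.trans (Nat.modEq_zero_iff_dvd.mpr hpdvd))))
  haveI : Finite (MulAction.fixedPoints Γ ↥W) := Subtype.finite
  have hcardpos : 0 < Nat.card (MulAction.fixedPoints Γ ↥W) :=
    Nat.card_pos_iff.mpr ⟨⟨⟨0, hzero_fixed⟩⟩, inferInstance⟩
  have h1lt : 1 < Nat.card (MulAction.fixedPoints Γ ↥W) :=
    lt_of_lt_of_le (Fact.out : p.Prime).one_lt (Nat.le_of_dvd hcardpos hpdvd_fixed)
  haveI : Nontrivial (MulAction.fixedPoints Γ ↥W) := Finite.one_lt_card_iff_nontrivial.mp h1lt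
  obtain ⟨w, hw⟩ := exists_ne (⟨0, hzero_fixed⟩ : MulAction.fixedPoints Γ ↥W)
  refine ⟨((w : ↥W) : V), ?_, ?_⟩
  · intro h
    apply hw
    apply Subtype.ext; apply Subtype.ext
    simpa using h
  · intro x
    have := w.2 x
    have := congrArg Subtype.val this
    rw [hsmul_def] at this
    exact this


set_option maxHeartbeats 2000000 in
/-- Let `K` be a local field with finite residue field `k` of characteristic
`p`, and `V` a continuous irreducible representation of `G_K` on a finite dimensional
`F̄_p`-vector space.  Then `V ≅ Ind_{G_L}^{G_K} χ` for an unramified extension `L/K` of degree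
`dim V` and a continuous character `χ : G_L → F̄_p^×`.

The structure of `G = G_K` is axiomatised: `G` is a compact topological group with closed
normal subgroups `P ≤ I` (wild and full inertia), `P` pro-`p`, the tame inertia `I/P` abelian
of pro-order prime to `p`, a Frobenius element `Frob` topologically generating `G/I`, and a
continuous splitting of `G → G/I`.  Subgroups `H ⊇ I` that are open of index `n` correspond
exactly to the `G_L` for `L/K` unramified of degree `n`; and `V ≅ Ind_{G_L}^{G_K} χ` is
expressed (for irreducible `V`, via Frobenius reciprocity and a dimension count) by
`[G : H] = dim V` together with the existence of a nonzero `χ`-eigenvector for `H`. -/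
theorem stmt_7 (p : ℕ) [Fact p.Prime]
    (G : Type*) [Group G] [TopologicalSpace G] [IsTopologicalGroup G] [CompactSpace G]
    (P I : Subgroup G) [P.Normal] [I.Normal] (hPI : P ≤ I)
    (hPclosed : IsClosed (P : Set G)) (hIclosed : IsClosed (I : Set G))
    (hProP : ∀ U : Subgroup ↥P, U.Normal → IsOpen (U : Set ↥P) →
      ∃ n : ℕ, Nat.card (↥P ⧸ U) = p ^ n)
    (htameab : ∀ g h : G, g ∈ I → h ∈ I → g * h * g⁻¹ * h⁻¹ ∈ P)
    (htameprime : ∀ σ : G, σ ∈ I → ∀ n : ℕ, σ ^ (p ^ n) ∈ P → σ ∈ P)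
    (Frob : G)
    (hgen : Dense (↑(Subgroup.closure ((I : Set G) ∪ {Frob})) : Set G))
    (s : G ⧸ I →* G) (hs : Continuous s) (hsec : ∀ x : G ⧸ I, ((s x : G) : G ⧸ I) = x)
    (V : Type*) [AddCommGroup V] [Module (AlgebraicClosure (ZMod p)) V]
    [FiniteDimensional (AlgebraicClosure (ZMod p)) V] [Nontrivial V]
    (ρ : Representation (AlgebraicClosure (ZMod p)) G V)
    (hρcont : IsOpen {g : G | ρ g = 1})
    (hρirr : ∀ W : Submodule (AlgebraicClosure (ZMod p)) V,
      (∀ g : G, ∀ v ∈ W, ρ g v ∈ W) → W = ⊥ ∨ W = ⊤) :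
    ∃ H : Subgroup G, IsOpen (H : Set G) ∧ I ≤ H ∧
      H.index = Module.finrank (AlgebraicClosure (ZMod p)) V ∧
      ∃ χ : ↥H →* (AlgebraicClosure (ZMod p))ˣ, IsOpen {h : ↥H | χ h = 1} ∧
        ∃ v : V, v ≠ 0 ∧ ∀ h : ↥H, ρ ↑h v = (χ h : AlgebraicClosure (ZMod p)) • v := by
  classical
  set F := AlgebraicClosure (ZMod p) with hFdef
  let ψ : G →* (V →ₗ[F] V)ˣ := ρ.asGroupHom
  have hψval : ∀ g : G, ((ψ g : V →ₗ[F] V)) = ρ g := fun g => ρ.asGroupHom_apply g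
  set N := ψ.ker with hNdef
  have hNmem : ∀ g : G, g ∈ N ↔ ρ g = 1 := by
    intro g
    rw [MonoidHom.mem_ker, Units.ext_iff, Units.val_one, hψval]
  have hNopen : IsOpen (N : Set G) := by
    have : (N : Set G) = {g : G | ρ g = 1} := by
      ext g; exact hNmem g
    rw [this]; exact hρcont
  have hNapp : ∀ g ∈ N, ∀ v : V, ρ g v = v := by
    intro g hg v
    rw [(hNmem g).1 hg]; rfl
  -- conjugation helpers
  have hconjI : ∀ (σ : G), σ ∈ I → ∀ g : G, g⁻¹ * σ * g ∈ I := by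
    intro σ hσ g
    simpa using (‹I.Normal›.conj_mem σ hσ g⁻¹)
  have hconjP : ∀ (σ : G), σ ∈ P → ∀ g : G, g⁻¹ * σ * g ∈ P := by
    intro σ hσ g
    simpa using (‹P.Normal›.conj_mem σ hσ g⁻¹)
  have hconjN : ∀ (σ : G), σ ∈ N → ∀ g : G, g⁻¹ * σ * g ∈ N := by
    intro σ hσ g
    have := (MonoidHom.normal_ker ψ).conj_mem σ hσ g⁻¹
    rwa [inv_inv] at this
  -- a G-stable nonzero submodule is everything
  have htop : ∀ W : Submodule F V, (∀ g : G, ∀ v ∈ W, ρ g v ∈ W) →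
      ∀ v₁, v₁ ∈ W → v₁ ≠ 0 → W = ⊤ := by
    intro W hst v₁ hv₁ hv₁0
    rcases hρirr W hst with h | h
    · exact absurd (h ▸ hv₁) (by simpa using hv₁0)
    · exact h
  -- Step 1 : ρ is trivial on P
  have hPtriv : ∀ g ∈ P, ∀ v : V, ρ g v = v := by
    obtain ⟨v₁, hv₁⟩ := exists_ne (0 : V)
    set U0 : Subgroup ↥P := N.comap P.subtype with hU0def
    haveI hU0norm : U0.Normal := Subgroup.normal_comap _
    have hU0open : IsOpen (U0 : Set ↥P) := hNopen.preimage continuous_subtype_val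
    obtain ⟨n, hn⟩ := hProP U0 hU0norm hU0open
    haveI : Finite (↥P ⧸ U0) := Nat.finite_of_card_ne_zero (by rw [hn]; exact pow_ne_zero n (Nat.Prime.ne_zero Fact.out))
    have hpg : IsPGroup p (↥P ⧸ U0) := IsPGroup.of_card hn
    let φ : (↥P ⧸ U0) →* (V →ₗ[F] V)ˣ :=
      QuotientGroup.lift U0 (ψ.comp P.subtype) (fun x hx => hx)
    obtain ⟨v, hv0, hvfix⟩ := pgroup_exists_fixed_vector hpg φ v₁ hv₁
    have hφapp : ∀ g : G, ∀ hg : g ∈ P, ∀ w : V,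
        ((φ (QuotientGroup.mk ⟨g, hg⟩) : V →ₗ[F] V)) w = ρ g w := by
      intro g hg w
      have : φ (QuotientGroup.mk ⟨g, hg⟩) = ψ g := QuotientGroup.lift_mk _ _ _
      rw [this, hψval]
    -- the fixed space of P
    set VP : Submodule F V :=
      { carrier := {w : V | ∀ g ∈ P, ρ g w = w}
        add_mem' := fun {a b} ha hb g hg => by rw [map_add, ha g hg, hb g hg]
        zero_mem' := fun g hg => by simp
        smul_mem' := fun c a ha g hg => by rw [map_smul, ha g hg] } with hVPdef
    have hvVP : v ∈ VP := by
      intro g hg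
      rw [← hφapp g hg v]
      exact hvfix _
    have hVPstable : ∀ g : G, ∀ w ∈ VP, ρ g w ∈ VP := by
      intro g w hw h hh
      have h1 : ρ h (ρ g w) = ρ g (ρ (g⁻¹ * h * g) w) := by
        rw [← Module.End.mul_apply, ← map_mul, ← Module.End.mul_apply, ← map_mul]
        congr 1
        group
      rw [h1, hw _ (hconjP h hh g)]
    have := htop VP hVPstable v hvVP hv0
    intro g hg w
    exact (this ▸ Submodule.mem_top : w ∈ VP) g hg
  have hψP : ∀ g ∈ P, ψ g = 1 := by
    intro g hg
    apply Units.ext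
    rw [Units.val_one, hψval]
    exact LinearMap.ext (hPtriv g hg)
  have hψN : ∀ g ∈ N, ψ g = 1 := fun g hg => hg
  -- Step 2 : ρ is commutative on I
  have hIcomm : ∀ g ∈ I, ∀ h ∈ I, Commute (ψ g) (ψ h) := by
    intro g hg h hh
    rw [← commutatorElement_eq_one_iff_commute]
    have h1 : ψ g * ψ h * (ψ g)⁻¹ * (ψ h)⁻¹ = ψ (g * h * g⁻¹ * h⁻¹) := by
      rw [map_mul, map_mul, map_mul, map_inv, map_inv]
    rw [commutatorElement_def, h1]
    exact hψP _ (htameab g h hg hh)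
  have hρIcomm : ∀ (σ τ : ↥I), Commute (ρ ↑σ) (ρ ↑τ) := by
    intro σ τ
    have := congrArg Units.val (hIcomm ↑σ σ.2 ↑τ τ.2)
    simpa [Units.val_mul, hψval, Commute, SemiconjBy] using this
  -- Step 3 : common eigenvector for I
  obtain ⟨v₀, hv₀, hev⟩ := exists_common_eigenvector_aux (Module.finrank F V) V
    inferInstance inferInstance rfl (fun σ : ↥I => ρ ↑σ) hρIcomm
  choose e he using hev
  have hcancel : ∀ {c d : F}, c • v₀ = d • v₀ → c = d := fun {c d} h =>
    smul_left_injective F hv₀ h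
  have he1 : e 1 = 1 := by
    apply hcancel
    rw [← he 1]
    norm_num
  have hemul : ∀ σ τ : ↥I, e (σ * τ) = e σ * e τ := by
    intro σ τ
    apply hcancel
    rw [← he (σ * τ)]
    have : ρ ↑(σ * τ) v₀ = ρ ↑σ (ρ ↑τ v₀) := by
      rw [← Module.End.mul_apply, ← map_mul]; rfl
    rw [this, he τ, map_smul, he σ, smul_smul, mul_comm (e τ)]
  -- Step 4 : the subgroup H
  set Hc : Subgroup G :=
    { carrier := {g : G | ∀ σ ∈ I, ρ (g⁻¹ * σ * g) v₀ = ρ σ v₀}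
      one_mem' := by intro σ hσ; group
      mul_mem' := by
        intro a b ha hb σ hσ
        have h1 : (a * b)⁻¹ * σ * (a * b) = b⁻¹ * (a⁻¹ * σ * a) * b := by group
        rw [h1, hb _ (hconjI σ hσ a), ha σ hσ]
      inv_mem' := by
        intro a ha σ hσ
        have h1 := ha (a * σ * a⁻¹) (by simpa using ‹I.Normal›.conj_mem σ hσ a)
        have h2 : a⁻¹ * (a * σ * a⁻¹) * a = σ := by group
        rw [h2] at h1
        have h3 : (a⁻¹)⁻¹ * σ * a⁻¹ = a * σ * a⁻¹ := by group
        rw [h3]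
        exact h1.symm } with hHcdef
  have hNleH : N ≤ Hc := by
    intro g hg σ hσ
    have h1 : ψ (g⁻¹ * σ * g) = ψ σ := by
      rw [map_mul, map_mul, map_inv, hψN g hg]; simp
    have h2 : ρ (g⁻¹ * σ * g) = ρ σ := by
      have h3 := congrArg Units.val h1
      rwa [hψval, hψval] at h3
    rw [h2]
  have hIleH : I ≤ Hc := by
    intro g hg σ hσ
    have hcomm := hIcomm g hg σ hσ
    have h1 : ψ (g⁻¹ * σ * g) = ψ σ := by
      rw [map_mul, map_mul, map_inv]
      rw [hcomm.inv_left.eq]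
      group
    have h2 : ρ (g⁻¹ * σ * g) = ρ σ := by
      have h3 := congrArg Units.val h1
      rwa [hψval, hψval] at h3
    rw [h2]
  have hHopen : IsOpen (Hc : Set G) := Subgroup.isOpen_mono hNleH hNopen
  -- eigenvalue invariance under H-conjugation
  have hconj_e : ∀ g ∈ Hc, ∀ (σ : G) (hσ : σ ∈ I),
      e ⟨g⁻¹ * σ * g, hconjI σ hσ g⟩ = e ⟨σ, hσ⟩ := by
    intro g hg σ hσ
    apply hcancel
    rw [← he ⟨g⁻¹ * σ * g, hconjI σ hσ g⟩, ← he ⟨σ, hσ⟩]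
    exact hg σ hσ
  -- the eigenspace U
  set U : Submodule F V :=
    { carrier := {v : V | ∀ σ : ↥I, ρ ↑σ v = e σ • v}
      add_mem' := fun {a b} ha hb σ => by rw [map_add, ha σ, hb σ, smul_add]
      zero_mem' := fun σ => by simp
      smul_mem' := fun c a ha σ => by rw [map_smul, ha σ, smul_comm] } with hUdef
  have hv₀U : v₀ ∈ U := fun σ => he σ
  have hUstab : ∀ g ∈ Hc, ∀ v ∈ U, ρ g v ∈ U := by
    intro g hg v hv σ
    have h1 : (↑σ : G) * g = g * (g⁻¹ * ↑σ * g) := by group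
    have h2 : ρ ↑σ (ρ g v) = ρ g (ρ (g⁻¹ * ↑σ * g) v) := by
      rw [← Module.End.mul_apply, ← map_mul, h1, map_mul, Module.End.mul_apply]
    rw [h2, hv ⟨g⁻¹ * ↑σ * g, hconjI ↑σ σ.2 g⟩, map_smul, hconj_e g hg ↑σ σ.2]
  -- every element decomposes as Frob^k * σ * n
  have hdecomp : ∀ g : G, ∃ (k : ℤ) (σ n : G), σ ∈ I ∧ n ∈ N ∧ g = Frob ^ k * σ * n := by
    intro g
    let D : Subgroup G :=
      { carrier := {x : G | ∃ (k : ℤ) (σ : G), σ ∈ I ∧ x = Frob ^ k * σ}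
        one_mem' := ⟨0, 1, one_mem I, by simp⟩
        mul_mem' := by
          rintro a b ⟨k, σ, hσ, rfl⟩ ⟨k', σ', hσ', rfl⟩
          exact ⟨k + k', ((Frob ^ k')⁻¹ * σ * Frob ^ k') * σ',
            mul_mem (hconjI σ hσ (Frob ^ k')) hσ', by group⟩
        inv_mem' := by
          rintro a ⟨k, σ, hσ, rfl⟩
          refine ⟨-k, Frob ^ k * σ⁻¹ * (Frob ^ k)⁻¹, ?_, by group⟩
          exact ‹I.Normal›.conj_mem σ⁻¹ (inv_mem hσ) (Frob ^ k) }
    have hCD : Subgroup.closure ((I : Set G) ∪ {Frob}) ≤ D := by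
      rw [Subgroup.closure_le]
      rintro x (hx | rfl)
      · exact ⟨0, x, hx, by simp⟩
      · exact ⟨1, 1, one_mem I, by simp⟩
    have hOopen : IsOpen {y : G | g⁻¹ * y ∈ N} :=
      hNopen.preimage (continuous_const.mul continuous_id)
    obtain ⟨x, hxC, hxO⟩ := hgen.exists_mem_open hOopen ⟨g, by simp [one_mem]⟩
    obtain ⟨k, σ, hσ, rfl⟩ := hCD hxC
    refine ⟨k, σ, (Frob ^ k * σ)⁻¹ * g, hσ, ?_, by group⟩
    have : g⁻¹ * (Frob ^ k * σ) ∈ N := hxO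
    simpa [mul_inv_rev] using inv_mem this
  -- computation of ρ on U for such normal forms
  have hUform : ∀ (k : ℤ) (σ n : G) (hσ : σ ∈ I), n ∈ N → ∀ v ∈ U,
      ρ (Frob ^ k * σ * n) v = e ⟨σ, hσ⟩ • ρ (Frob ^ k) v := by
    intro k σ n hσ hn v hv
    have h1 : ρ (Frob ^ k * σ * n) v = ρ (Frob ^ k) (ρ σ (ρ n v)) := by
      rw [map_mul, map_mul, Module.End.mul_apply, Module.End.mul_apply]
    rw [h1, hNapp n hn v, hv ⟨σ, hσ⟩, map_smul]
  -- commutativity of ρ(H) on U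
  have hcommU : ∀ g ∈ Hc, ∀ g' ∈ Hc, ∀ v ∈ U, ρ (g * g') v = ρ (g' * g) v := by
    intro g hgH g' hg'H v hv
    obtain ⟨k, σ, n, hσ, hn, rfl⟩ := hdecomp g
    obtain ⟨k', σ', n', hσ', hn', rfl⟩ := hdecomp g'
    have hFk : Frob ^ k ∈ Hc := by
      have h1 : Frob ^ k = (Frob ^ k * σ * n) * n⁻¹ * σ⁻¹ := by group
      rw [h1]
      exact mul_mem (mul_mem hgH (inv_mem (hNleH hn))) (inv_mem (hIleH hσ))
    have hFk' : Frob ^ k' ∈ Hc := by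
      have h1 : Frob ^ k' = (Frob ^ k' * σ' * n') * n'⁻¹ * σ'⁻¹ := by group
      rw [h1]
      exact mul_mem (mul_mem hg'H (inv_mem (hNleH hn'))) (inv_mem (hIleH hσ'))
    have hσ₁ : (Frob ^ k')⁻¹ * σ * Frob ^ k' ∈ I := hconjI σ hσ (Frob ^ k')
    have hσ₂ : (Frob ^ k)⁻¹ * σ' * Frob ^ k ∈ I := hconjI σ' hσ' (Frob ^ k)
    have hn₁ : σ'⁻¹ * ((Frob ^ k')⁻¹ * n * Frob ^ k') * σ' ∈ N :=
      hconjN _ (hconjN n hn (Frob ^ k')) σ'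
    have hn₂ : σ⁻¹ * ((Frob ^ k)⁻¹ * n' * Frob ^ k) * σ ∈ N :=
      hconjN _ (hconjN n' hn' (Frob ^ k)) σ
    have e1 : Frob ^ k * σ * n * (Frob ^ k' * σ' * n') =
        Frob ^ (k + k') * (((Frob ^ k')⁻¹ * σ * Frob ^ k') * σ') *
          ((σ'⁻¹ * ((Frob ^ k')⁻¹ * n * Frob ^ k') * σ') * n') := by
      rw [zpow_add]; group
    have e2 : Frob ^ k' * σ' * n' * (Frob ^ k * σ * n) =
        Frob ^ (k + k') * (((Frob ^ k)⁻¹ * σ' * Frob ^ k) * σ) *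
          ((σ⁻¹ * ((Frob ^ k)⁻¹ * n' * Frob ^ k) * σ) * n) := by
      rw [add_comm k k', zpow_add]; group
    rw [e1, e2]
    rw [hUform (k + k') _ _ (mul_mem hσ₁ hσ') (mul_mem hn₁ hn') v hv]
    rw [hUform (k + k') _ _ (mul_mem hσ₂ hσ) (mul_mem hn₂ hn) v hv]
    congr 1
    have h1 : (⟨((Frob ^ k')⁻¹ * σ * Frob ^ k') * σ', mul_mem hσ₁ hσ'⟩ : ↥I) =
        ⟨(Frob ^ k')⁻¹ * σ * Frob ^ k', hσ₁⟩ * ⟨σ', hσ'⟩ := rfl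
    have h2 : (⟨((Frob ^ k)⁻¹ * σ' * Frob ^ k) * σ, mul_mem hσ₂ hσ⟩ : ↥I) =
        ⟨(Frob ^ k)⁻¹ * σ' * Frob ^ k, hσ₂⟩ * ⟨σ, hσ⟩ := rfl
    rw [h1, h2, hemul, hemul]
    have h3 : (⟨(Frob ^ k')⁻¹ * σ * Frob ^ k', hσ₁⟩ : ↥I) =
        ⟨(Frob ^ k')⁻¹ * σ * Frob ^ k', hconjI σ hσ (Frob ^ k')⟩ := rfl
    have h4 : (⟨(Frob ^ k)⁻¹ * σ' * Frob ^ k, hσ₂⟩ : ↥I) =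
        ⟨(Frob ^ k)⁻¹ * σ' * Frob ^ k, hconjI σ' hσ' (Frob ^ k)⟩ := rfl
    rw [h3, hconj_e _ hFk' σ hσ, h4, hconj_e _ hFk σ' hσ']
    exact mul_comm _ _
  -- Step 5 : common eigenvector for H inside U
  haveI hUnt : Nontrivial ↥U := ⟨⟨⟨v₀, hv₀U⟩, 0, by
    intro h
    exact hv₀ (by simpa using congrArg Subtype.val h)⟩⟩
  let r : ↥Hc → Module.End F ↥U := fun h => (ρ ↑h).restrict (hUstab ↑h h.2)
  have hrcomm : ∀ h h' : ↥Hc, Commute (r h) (r h') := by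
    intro h h'
    apply LinearMap.ext
    rintro ⟨v, hv⟩
    apply Subtype.ext
    simp only [Module.End.mul_apply, r, LinearMap.restrict_coe_apply]
    have hone : ρ (↑h) (ρ (↑h') v) = ρ (↑h * ↑h') v := by
      rw [map_mul, Module.End.mul_apply]
    have htwo : ρ (↑h') (ρ (↑h) v) = ρ (↑h' * ↑h) v := by
      rw [map_mul, Module.End.mul_apply]
    rw [hone, htwo]
    exact hcommU ↑h h.2 ↑h' h'.2 v hv
  obtain ⟨u', hu'0, hu'⟩ := exists_common_eigenvector_aux (Module.finrank F ↥U) ↥U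
    inferInstance hUnt rfl r hrcomm
  set u : V := (u' : V) with hudef
  have hu0 : u ≠ 0 := by
    intro h
    exact hu'0 (Subtype.ext h)
  have huU : u ∈ U := u'.2
  have hhu : ∀ h : ↥Hc, ∃ c : F, ρ ↑h u = c • u := by
    intro h
    obtain ⟨c, hc⟩ := hu' h
    refine ⟨c, ?_⟩
    have := congrArg Subtype.val hc
    simpa [r, LinearMap.restrict_coe_apply] using this
  choose c hc using hhu
  have hucancel : ∀ {a b : F}, a • u = b • u → a = b := fun {a b} h =>
    smul_left_injective F hu0 h
  have hcne : ∀ h : ↥Hc, c h ≠ 0 := by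
    intro h h0
    apply hu0
    have h1 : ρ ↑h u = 0 := by rw [hc h, h0, zero_smul]
    have h2 : ρ ((↑h)⁻¹ * ↑h) u = 0 := by
      rw [map_mul, Module.End.mul_apply, h1, map_zero]
    simpa using h2
  have hcmul : ∀ a b : ↥Hc, c (a * b) = c a * c b := by
    intro a b
    apply hucancel
    rw [← hc (a * b)]
    have : ρ (↑(a * b) : G) u = ρ ↑a (ρ ↑b u) := by
      rw [← Module.End.mul_apply, ← map_mul]; rfl
    rw [this, hc b, map_smul, hc a, smul_smul, mul_comm (c b)]
  let χ : ↥Hc →* Fˣ := MonoidHom.mk' (fun h => Units.mk0 (c h) (hcne h))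
    (fun a b => Units.ext (by simpa using hcmul a b))
  have hχval : ∀ h : ↥Hc, (χ h : F) = c h := fun h => rfl
  have hcN : ∀ h : ↥Hc, (↑h : G) ∈ N → c h = 1 := by
    intro h hh
    apply hucancel
    rw [← hc h, hNapp ↑h hh u, one_smul]
  -- χ is continuous
  have hχopen : IsOpen {h : ↥Hc | χ h = 1} := by
    have hT : IsOpen (⋃ h₀ : {h : ↥Hc // χ h = 1},
        (fun y : G => ((h₀ : ↥Hc) : G) * y) '' (N : Set G)) :=
      isOpen_iUnion fun h₀ =>
        (Homeomorph.mulLeft (((h₀ : ↥Hc) : G))).isOpenMap _ hNopen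
    have hset : {h : ↥Hc | χ h = 1} = Subtype.val ⁻¹' (⋃ h₀ : {h : ↥Hc // χ h = 1},
        (fun y : G => ((h₀ : ↥Hc) : G) * y) '' (N : Set G)) := by
      ext h
      constructor
      · intro hh
        refine Set.mem_preimage.mpr (Set.mem_iUnion.mpr ⟨⟨h, hh⟩, 1, one_mem N, ?_⟩)
        simp
      · intro hh
        obtain ⟨h₀, y, hy, hxy⟩ := Set.mem_iUnion.mp (Set.mem_preimage.mp hh)
        have hm : ((h₀ : ↥Hc) : G)⁻¹ * ↑h ∈ N := by
          rw [← hxy]; simpa using hy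
        set m : ↥Hc := (h₀ : ↥Hc)⁻¹ * h with hmdef
        have hmN : (↑m : G) ∈ N := hm
        have h1 : h = (h₀ : ↥Hc) * m := by rw [hmdef]; group
        show χ h = 1
        rw [h1, map_mul, h₀.2, one_mul]
        apply Units.ext
        rw [hχval, hcN m hmN, Units.val_one]
      
    rw [hset]
    exact hT.preimage continuous_subtype_val
  -- index computation
  haveI hfin : Finite (G ⧸ Hc) := Subgroup.quotient_finite_of_isOpen Hc hHopen
  haveI : Fintype (G ⧸ Hc) := Fintype.ofFinite _
  let b : G ⧸ Hc → V := fun x => ρ x.out u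
  have hbne : ∀ x, b x ≠ 0 := by
    intro x h
    apply hu0
    have h1 : ρ x.out u = 0 := h
    have h2 : ρ ((x.out)⁻¹ * x.out) u = 0 := by
      rw [map_mul, Module.End.mul_apply, h1, map_zero]
    simpa using h2
  -- b spans V
  have hstable : ∀ g : G, ∀ v ∈ Submodule.span F (Set.range b),
      ρ g v ∈ Submodule.span F (Set.range b) := by
    intro g v hv
    induction hv using Submodule.span_induction with
    | mem y hy =>
      obtain ⟨x, rfl⟩ := hy
      set y := (QuotientGroup.mk (g * x.out) : G ⧸ Hc) with hydef
      have h1 : (QuotientGroup.mk (g * x.out) : G ⧸ Hc) = QuotientGroup.mk y.out :=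
        (QuotientGroup.out_eq' y).symm
      have h2 : (g * x.out)⁻¹ * y.out ∈ Hc := QuotientGroup.eq.mp h1
      set m : ↥Hc := ⟨(g * x.out)⁻¹ * y.out, h2⟩ with hmdef
      have h3 : g * x.out = y.out * (↑m)⁻¹ := by rw [hmdef]; group
      have h4 : ρ g (b x) = c m⁻¹ • b y := by
        show ρ g (ρ x.out u) = c m⁻¹ • ρ y.out u
        rw [← Module.End.mul_apply, ← map_mul, h3, map_mul, Module.End.mul_apply]
        have : ρ ((↑m)⁻¹ : G) u = c m⁻¹ • u := hc m⁻¹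
        rw [this, map_smul]
      rw [h4]
      exact Submodule.smul_mem _ _ (Submodule.subset_span ⟨y, rfl⟩)
    | zero => simp
    | add a b _ _ ha hb => rw [map_add]; exact Submodule.add_mem _ ha hb
    | smul t a _ ha => rw [map_smul]; exact Submodule.smul_mem _ t ha
  have hspan : Submodule.span F (Set.range b) = ⊤ :=
    htop _ hstable (b (QuotientGroup.mk 1)) (Submodule.subset_span ⟨_, rfl⟩)
      (hbne _)
  -- characters
  have hconjmem : ∀ (g : G) (σ : ↥I), g⁻¹ * ↑σ * g ∈ I := fun g σ => hconjI ↑σ σ.2 g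
  let ε0 : G → (↥I →* F) := fun g =>
    { toFun := fun σ => e ⟨g⁻¹ * ↑σ * g, hconjmem g σ⟩
      map_one' := by
        show e ⟨g⁻¹ * ↑(1 : ↥I) * g, hconjmem g 1⟩ = 1
        have h1 : (⟨g⁻¹ * ↑(1 : ↥I) * g, hconjmem g 1⟩ : ↥I) = 1 := by
          apply Subtype.ext
          simp
        rw [h1, he1]
      map_mul' := by
        intro σ τ
        show e ⟨g⁻¹ * ↑(σ * τ) * g, hconjmem g (σ * τ)⟩ =
          e ⟨g⁻¹ * ↑σ * g, hconjmem g σ⟩ * e ⟨g⁻¹ * ↑τ * g, hconjmem g τ⟩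
        have h1 : (⟨g⁻¹ * ↑(σ * τ) * g, hconjmem g (σ * τ)⟩ : ↥I) =
            ⟨g⁻¹ * ↑σ * g, hconjmem g σ⟩ * ⟨g⁻¹ * ↑τ * g, hconjmem g τ⟩ := by
          apply Subtype.ext
          show g⁻¹ * (↑σ * ↑τ) * g = (g⁻¹ * ↑σ * g) * (g⁻¹ * ↑τ * g)
          group
        rw [h1, hemul] }
  let ε : G ⧸ Hc → (↥I →* F) := fun x => ε0 x.out
  have hεapp : ∀ (x : G ⧸ Hc) (σ : ↥I), ε x σ = e ⟨x.out⁻¹ * ↑σ * x.out, hconjmem x.out σ⟩ :=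
    fun x σ => rfl
  -- e-determines-coset
  have hcoset : ∀ g g' : G, (∀ σ : ↥I, e ⟨g⁻¹ * ↑σ * g, hconjmem g σ⟩ =
      e ⟨g'⁻¹ * ↑σ * g', hconjmem g' σ⟩) → g'⁻¹ * g ∈ Hc := by
    intro g g' hee σ hσ
    have hσ' : g' * σ * g'⁻¹ ∈ I := by simpa using ‹I.Normal›.conj_mem σ hσ g'
    have h1 := hee ⟨g' * σ * g'⁻¹, hσ'⟩
    have h2 : (⟨g'⁻¹ * ↑(⟨g' * σ * g'⁻¹, hσ'⟩ : ↥I) * g', hconjmem g' _⟩ : ↥I) = ⟨σ, hσ⟩ := by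
      apply Subtype.ext
      show g'⁻¹ * (g' * σ * g'⁻¹) * g' = σ
      group
    rw [h2] at h1
    have h3 : (⟨g⁻¹ * ↑(⟨g' * σ * g'⁻¹, hσ'⟩ : ↥I) * g, hconjmem g _⟩ : ↥I) =
        ⟨(g'⁻¹ * g)⁻¹ * σ * (g'⁻¹ * g), hconjI σ hσ (g'⁻¹ * g)⟩ := by
      apply Subtype.ext
      show g⁻¹ * (g' * σ * g'⁻¹) * g = (g'⁻¹ * g)⁻¹ * σ * (g'⁻¹ * g)
      group
    rw [h3] at h1
    rw [he ⟨(g'⁻¹ * g)⁻¹ * σ * (g'⁻¹ * g), hconjI σ hσ (g'⁻¹ * g)⟩, he ⟨σ, hσ⟩, h1]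
  have hεinj : Function.Injective ε := by
    intro x y hxy
    have h' : ∀ σ : ↥I, e ⟨x.out⁻¹ * ↑σ * x.out, hconjmem x.out σ⟩ =
        e ⟨y.out⁻¹ * ↑σ * y.out, hconjmem y.out σ⟩ := by
      intro σ
      have := DFunLike.congr_fun hxy σ
      exact this
    have h2 : y.out⁻¹ * x.out ∈ Hc := hcoset x.out y.out h'
    calc x = QuotientGroup.mk x.out := (QuotientGroup.out_eq' x).symm
    _ = QuotientGroup.mk y.out := (QuotientGroup.eq.mpr h2).symm
    _ = y := QuotientGroup.out_eq' y
  have heigb : ∀ (x : G ⧸ Hc) (σ : ↥I), ρ ↑σ (b x) = ε x σ • b x := by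
    intro x σ
    show ρ ↑σ (ρ x.out u) = ε x σ • ρ x.out u
    have h1 : (↑σ : G) * x.out = x.out * (x.out⁻¹ * ↑σ * x.out) := by group
    rw [← Module.End.mul_apply, ← map_mul, h1, map_mul, Module.End.mul_apply,
      huU ⟨x.out⁻¹ * ↑σ * x.out, hconjmem x.out σ⟩, map_smul, hεapp]
  -- b is linearly independent
  have hli : LinearIndependent F b := by
    rw [Fintype.linearIndependent_iff]
    intro cc hcc x
    have key : ∀ φ : Module.Dual F V, cc x * φ (b x) = 0 := by
      intro φ
      have hfun : ∑ y : G ⧸ Hc, (cc y * φ (b y)) • ((ε y : ↥I → F)) = 0 := by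
        funext σ
        have h1 : ρ ↑σ (∑ y : G ⧸ Hc, cc y • b y) = 0 := by rw [hcc, map_zero]
        rw [map_sum] at h1
        simp only [map_smul, heigb] at h1
        have h2 := congrArg φ h1
        rw [map_sum, map_zero] at h2
        have h3 : ∑ y : G ⧸ Hc, (cc y * φ (b y)) * ε y σ = 0 := by
          rw [← h2]
          apply Finset.sum_congr rfl
          intro y _
          rw [smul_smul, map_smul, smul_eq_mul]
          ring
        calc (∑ y : G ⧸ Hc, (cc y * φ (b y)) • ((ε y : ↥I → F))) σ
            = ∑ y : G ⧸ Hc, (cc y * φ (b y)) * ε y σ := by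
              rw [Finset.sum_apply]
              apply Finset.sum_congr rfl
              intro y _
              rfl
        _ = 0 := h3
      have hli2 : LinearIndependent F (fun y : G ⧸ Hc => ((ε y : ↥I → F))) := by
        have h0 : (fun y : G ⧸ Hc => ((ε y : ↥I → F))) =
            (fun f : ↥I →* F => (f : ↥I → F)) ∘ ε := rfl
        rw [h0]
        exact (linearIndependent_monoidHom ↥I F).comp ε hεinj
      have := Fintype.linearIndependent_iff.mp hli2 (fun y => cc y * φ (b y)) hfun x
      exact this
    have h4 : (cc x) • b x = 0 := by
      rw [← Module.forall_dual_apply_eq_zero_iff F (cc x • b x)]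
      intro φ
      rw [map_smul, smul_eq_mul]
      exact key φ
    rcases smul_eq_zero.mp h4 with h | h
    · exact h
    · exact absurd h (hbne x)
  -- the basis
  let bas : Module.Basis (G ⧸ Hc) F V := Module.Basis.mk hli (le_of_eq hspan.symm)
  have hindex : Hc.index = Module.finrank F V := by
    rw [Module.finrank_eq_card_basis bas, Subgroup.index, Nat.card_eq_fintype_card]
  exact ⟨Hc, hHopen, hIleH, hindex, χ, hχopen, u, hu0, fun h => by rw [hc h]; rfl⟩
end

section
/- Let l/F_p be a finite extension of degree d, and suppose integers δ_θ ≥ 0 and r_θ ∈ [0,p] indexed by θ ∈ Hom_{F_p}(l, F̄_p) satisfy p·δ_{θ∘φ} − δ_θ + r_θ ∈ [0,p] for all θ. Then δ_θ ∈ {0,1} for all θ if p > 2, and δ_θ ∈ {0,1,2} for all θ if p = 2; moreover if p = 2 and δ_{θ∘φ} = 2 for some θ, then δ_θ = 2 and r_θ = 0, and hence r_θ = 0 for all θ. -/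
/-- Let `l/F_p` be a finite extension of degree `d`, and suppose integers
`δ_θ ≥ 0` and `r_θ ∈ [0,p]`, indexed by `θ ∈ Hom_{F_p}(l, F̄_p)`, satisfy
`p·δ_{θ∘φ} − δ_θ + r_θ ∈ [0,p]` for all `θ`.  Then `δ_θ ∈ {0,1}` for all `θ` if `p > 2`, and
`δ_θ ∈ {0,1,2}` if `p = 2`; moreover if `p = 2` and `δ_{θ∘φ} = 2` for some `θ`, then `δ_θ = 2`
and `r_θ = 0`, and hence `r_θ = 0` for all `θ`.  Here `φ` is the Frobenius of `l`, acting on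
embeddings by precomposition. -/
theorem stmt_19 (p : ℕ) [Fact p.Prime] (l : Type*) [Field l] [Fintype l] [CharP l p]
    (d : ℕ) (hd : 0 < d) (hcard : Fintype.card l = p ^ d)
    (δ : (l →+* AlgebraicClosure (ZMod p)) → ℕ)
    (r : (l →+* AlgebraicClosure (ZMod p)) → ℤ)
    (hr : ∀ θ : l →+* AlgebraicClosure (ZMod p), 0 ≤ r θ ∧ r θ ≤ (p : ℤ))
    (hkey : ∀ θ : l →+* AlgebraicClosure (ZMod p),
      0 ≤ (p : ℤ) * (δ (θ.comp (frobenius l p)) : ℤ) - (δ θ : ℤ) + r θ ∧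
      (p : ℤ) * (δ (θ.comp (frobenius l p)) : ℤ) - (δ θ : ℤ) + r θ ≤ (p : ℤ)) :
    (2 < p → ∀ θ : l →+* AlgebraicClosure (ZMod p), δ θ ≤ 1) ∧
    (p = 2 → ∀ θ : l →+* AlgebraicClosure (ZMod p), δ θ ≤ 2) ∧
    (p = 2 → ∀ θ : l →+* AlgebraicClosure (ZMod p),
      δ (θ.comp (frobenius l p)) = 2 → δ θ = 2 ∧ r θ = 0) ∧
    (p = 2 → (∃ θ : l →+* AlgebraicClosure (ZMod p), δ (θ.comp (frobenius l p)) = 2) →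
      ∀ θ : l →+* AlgebraicClosure (ZMod p), r θ = 0) := by
  have hp2 : 2 ≤ p := (Fact.out : p.Prime).two_le
  set K := AlgebraicClosure (ZMod p) with hK
  set φ := frobenius l p with hφ
  have hφd : φ ^ d = 1 := FiniteField.frobenius_pow hcard
  have hcomp : ∀ (θ : l →+* K) (i : ℕ),
      (θ.comp (φ ^ i)).comp φ = θ.comp (φ ^ (i + 1)) := by
    intro θ i
    rw [RingHom.comp_assoc, ← RingHom.mul_def, ← pow_succ]
  -- the global bound
  have bound : ∀ θ : l →+* K, ((p : ℤ) - 1) * (δ θ : ℤ) ≤ p := by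
    intro θ
    set a : ℕ → ℤ := fun i => (δ (θ.comp (φ ^ i)) : ℤ) with ha
    have ha0 : a 0 = (δ θ : ℤ) := by simp [ha, pow_zero, RingHom.one_def, RingHom.comp_id]
    have had : a d = a 0 := by simp [ha, hφd, pow_zero, RingHom.one_def, RingHom.comp_id]
    have hstep : ∀ i, (p : ℤ) * a (i + 1) - a i ≤ p := by
      intro i
      have h2 := (hkey (θ.comp (φ ^ i))).2
      have h1 := (hr (θ.comp (φ ^ i))).1
      rw [hcomp θ i] at h2
      simp only [ha]
      linarith
    have tele : ∑ i ∈ Finset.range d, ((p : ℤ) ^ (i+1) * a (i+1) - (p : ℤ) ^ i * a i)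
        = ((p : ℤ) ^ d - 1) * a 0 := by
      rw [Finset.sum_range_sub (fun i => (p : ℤ) ^ i * a i) d, had]
      ring
    have hsum : ∑ i ∈ Finset.range d, ((p : ℤ) ^ (i+1) * a (i+1) - (p : ℤ) ^ i * a i)
        ≤ ∑ i ∈ Finset.range d, (p : ℤ) ^ i * p := by
      apply Finset.sum_le_sum
      intro i _
      have := mul_le_mul_of_nonneg_left (hstep i) (pow_nonneg (by positivity) i : (0:ℤ) ≤ (p:ℤ)^i)
      calc (p : ℤ) ^ (i+1) * a (i+1) - (p : ℤ) ^ i * a i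
          = (p : ℤ) ^ i * ((p : ℤ) * a (i+1) - a i) := by ring
        _ ≤ (p : ℤ) ^ i * p := this
    have hG : (∑ i ∈ Finset.range d, (p : ℤ) ^ i) * ((p : ℤ) - 1) = (p : ℤ) ^ d - 1 :=
      geom_sum_mul _ d
    set G : ℤ := ∑ i ∈ Finset.range d, (p : ℤ) ^ i with hGdef
    have hGpos : 0 < G := by
      apply Finset.sum_pos (fun i _ => pow_pos (by positivity) i)
      simpa using hd.ne'
    have key : G * (((p : ℤ) - 1) * (δ θ : ℤ)) ≤ G * p := by
      have hle : ((p:ℤ)^d - 1) * a 0 ≤ G * p := by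
        rw [← tele]
        calc _ ≤ ∑ i ∈ Finset.range d, (p : ℤ) ^ i * p := hsum
          _ = G * p := by rw [hGdef, Finset.sum_mul]
      calc G * (((p : ℤ) - 1) * (δ θ : ℤ)) = ((p:ℤ)^d - 1) * a 0 := by
            rw [← hG, ha0]; ring
        _ ≤ G * p := hle
    exact le_of_mul_le_mul_left key hGpos
  have h1 : 2 < p → ∀ θ : l →+* K, δ θ ≤ 1 := by
    intro hp θ
    have hb := bound θ
    have hδ : (0 : ℤ) ≤ (δ θ : ℤ) := Int.natCast_nonneg _
    have hpz : (3 : ℤ) ≤ (p : ℤ) := by exact_mod_cast hp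
    nlinarith [hb, hδ, hpz]
  have h2 : p = 2 → ∀ θ : l →+* K, δ θ ≤ 2 := by
    intro hp θ
    have hb := bound θ
    have hpz : (p : ℤ) = 2 := by rw [hp]; norm_num
    rw [hpz] at hb
    push_cast at hb
    omega
  have h3 : p = 2 → ∀ θ : l →+* K, δ (θ.comp φ) = 2 → δ θ = 2 ∧ r θ = 0 := by
    intro hp θ hθ
    have hk := (hkey θ).2
    have hrθ := hr θ
    have hδ2 := h2 hp θ
    have hpz : (p : ℤ) = 2 := by rw [hp]; norm_num
    rw [hθ, hpz] at hk
    push_cast at hk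
    have : (δ θ : ℤ) = 2 := by omega
    constructor
    · exact_mod_cast this
    · omega
  refine ⟨h1, h2, h3, ?_⟩
  -- Part 4
  intro hp ⟨θ₀, hθ₀⟩ θ
  -- Step 1: δ is 2 on the whole forward orbit of θ₀
  have orbit : ∀ m, δ (θ₀.comp (φ ^ m)) = 2 := by
    have step : ∀ n, δ (θ₀.comp (φ ^ (n + 1))) = 2 → δ (θ₀.comp (φ ^ n)) = 2 := by
      intro n h
      exact (h3 hp (θ₀.comp (φ ^ n)) (by rw [hcomp θ₀ n]; exact h)).1
    intro m
    set N := 1 + d * m with hN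
    have hmN : m ≤ N := by
      have h1 : m ≤ d * m := Nat.le_mul_of_pos_left m hd
      omega
    have hAN : δ (θ₀.comp (φ ^ N)) = 2 := by
      have : φ ^ N = φ := by
        rw [hN, pow_add, pow_mul, hφd, one_pow, mul_one, pow_one]
      rw [this]
      simpa using hθ₀
    have desc : ∀ j, δ (θ₀.comp (φ ^ (N - j))) = 2 := by
      intro j
      induction j with
      | zero => simpa using hAN
      | succ j ih =>
        by_cases h : j + 1 ≤ N
        · have he : N - (j + 1) + 1 = N - j := by omega
          apply step
          rw [he]
          exact ih
        · have he : N - (j + 1) = N - j := by omega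
          rw [he]; exact ih
    have := desc (N - m)
    rwa [Nat.sub_sub_self hmN] at this
  -- Step 2: every embedding is in the orbit of θ₀
  letI : Algebra (ZMod p) l := ZMod.algebra l p
  have hfinrank : Module.finrank (ZMod p) l = d := by
    have hc := Module.card_eq_pow_finrank (K := ZMod p) (V := l)
    rw [ZMod.card, hcard] at hc
    exact (Nat.pow_right_injective hp2 hc).symm
  -- ring homs are the same as algebra homs
  let e : (l →ₐ[ZMod p] K) ≃ (l →+* K) :=
    { toFun := fun f => f.toRingHom
      invFun := fun g =>
        { toRingHom := g
          commutes' := fun c =>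
            RingHom.congr_fun (RingHom.ext_zmod (g.comp (algebraMap (ZMod p) l))
              (algebraMap (ZMod p) K)) c }
      left_inv := fun f => by ext x; rfl
      right_inv := fun g => by ext x; rfl }
  letI : Fintype (l →+* K) := Fintype.ofEquiv _ e
  have hcardHom : Fintype.card (l →+* K) = d := by
    rw [← Fintype.card_congr e, AlgHom.card (ZMod p) l K, hfinrank]
  -- the orbit map is injective
  let F : Fin d → (l →+* K) := fun k => θ₀.comp (φ ^ (k : ℕ))
  have hFinj : Function.Injective F := by
    intro i j hij
    have hpt : ∀ x : l, x ^ p ^ (i : ℕ) = x ^ p ^ (j : ℕ) := by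
      intro x
      have := RingHom.congr_fun hij x
      simp only [F, RingHom.comp_apply] at this
      have hx := θ₀.injective this
      rwa [hφ, RingHom.coe_pow, RingHom.coe_pow, iterate_frobenius, iterate_frobenius] at hx
    -- use a generator of lˣ
    obtain ⟨g, hg⟩ := IsCyclic.exists_generator (α := lˣ)
    have horder : orderOf g = p ^ d - 1 := by
      rw [orderOf_eq_card_of_forall_mem_zpowers hg, Nat.card_units,
        Nat.card_eq_fintype_card, hcard]
    have hgu : (g : l) ^ p ^ (i : ℕ) = (g : l) ^ p ^ (j : ℕ) := hpt g
    have hgu' : g ^ p ^ (i : ℕ) = g ^ p ^ (j : ℕ) := by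
      ext
      push_cast
      exact hgu
    -- conclude i = j
    have aux : ∀ a b : ℕ, a < b → b < d → g ^ p ^ a = g ^ p ^ b → False := by
      intro a b hab hbd hgab
      have hdvd : orderOf g ∣ p ^ b - p ^ a := by
        apply orderOf_dvd_of_pow_eq_one
        have hle : p ^ a ≤ p ^ b := Nat.pow_le_pow_right (by omega) hab.le
        have h1 : g ^ (p ^ b - p ^ a + p ^ a) = 1 * g ^ p ^ a := by
          rw [Nat.sub_add_cancel hle, one_mul, hgab]
        rw [pow_add] at h1
        exact mul_right_cancel h1
      rw [horder] at hdvd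
      have hpos : 0 < p ^ b - p ^ a := by
        have := Nat.pow_lt_pow_right (by omega : 1 < p) hab
        omega
      have hlt : p ^ b - p ^ a < p ^ d - 1 := by
        have h1 : p ^ b ≤ p ^ (d - 1) := Nat.pow_le_pow_right (by omega) (by omega)
        have h2 : p ^ (d - 1) < p ^ d := Nat.pow_lt_pow_right (by omega) (by omega)
        have h3 : (1:ℕ) ≤ p ^ a := Nat.one_le_pow _ _ (by omega)
        omega
      have := Nat.le_of_dvd hpos hdvd
      omega
    rcases lt_trichotomy (i : ℕ) (j : ℕ) with h | h | h
    · exact absurd hgu' (fun hh => aux i j h j.isLt hh)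
    · exact Fin.ext h
    · exact absurd hgu'.symm (fun hh => aux j i h i.isLt hh)
  have hFsurj : Function.Surjective F := by
    have hbij : Function.Bijective F :=
      (Fintype.bijective_iff_injective_and_card F).2 ⟨hFinj, by simp [hcardHom]⟩
    exact hbij.2
  obtain ⟨k, hk⟩ := hFsurj θ
  have : δ (θ.comp φ) = 2 := by
    rw [← hk]
    show δ ((θ₀.comp (φ ^ (k : ℕ))).comp φ) = 2
    rw [hcomp θ₀ k]
    exact orbit _
  exact (h3 hp θ this).2
end
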